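/- The number of PGL_2(R_S)-orbits on P^1(K) equals the class number of R_S: two points [x:y] and [x':y'] with S-integral coordinates are in the same orbit if and only if the fractional ideals (xR_S + yR_S) and (x'R_S + y'R_S) are in the same ideal class. -/

import Mathlib

open IsDedekindDomain

set_option maxHeartbeats 1000000
set_option synthInstance.maxHeartbeats 400000

/-- The ring of `S`-integers of a number field `K`. -/
noncomputable abbrev sIntegers (K : Type*) [Field K] [NumberField K]
    (S : Finset (HeightOneSpectrum (NumberField.RingOfIntegers K))) :=
  ((S : Set (HeightOneSpectrum (NumberField.RingOfIntegers K))).integer K)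

namespace SIntAux

variable {K : Type*} [Field K] [NumberField K]
  (S : Finset (HeightOneSpectrum (NumberField.RingOfIntegers K)))

local notation "O" => NumberField.RingOfIntegers K

lemma intVal_eq_one {v : HeightOneSpectrum O} {a : O} (ha : a ∉ v.asIdeal) :
    v.intValuationDef a = 1 := by
  rcases lt_or_eq_of_le (v.intValuation_le_one a) with hlt | he
  · exact absurd (Ideal.dvd_iff_le.mp ((v.intValuation_lt_one_iff_dvd a).mp hlt)
      (Ideal.mem_span_singleton_self a)) ha
  · exact he

lemma one_notMem (v : HeightOneSpectrum O) : (1 : O) ∉ v.asIdeal :=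
  fun h1 => v.isPrime.ne_top (Ideal.eq_top_iff_one _ |>.mpr h1)

/-- Key lemma: any `z ∈ K` with nonnegative valuation outside `S` can be written as `b/a`
with `a` an `S`-unit-type denominator. -/
lemma exists_denom (z : K)
    (hz : ∀ v : HeightOneSpectrum O, v ∉ (S : Set (HeightOneSpectrum O)) → v.valuation K z ≤ 1) :
    ∃ a : O, a ≠ 0 ∧ (∀ v : HeightOneSpectrum O, v ∉ (S : Set (HeightOneSpectrum O)) →
      a ∉ v.asIdeal) ∧ ∃ b : O, z * algebraMap O K a = algebraMap O K b := by
  by_cases hz0 : z = 0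
  · exact ⟨1, one_ne_zero, fun v _ => one_notMem v, 0, by simp [hz0]⟩
  obtain ⟨x, y, hy, hxy⟩ := IsFractionRing.div_surjective (A := O) z
  have hy0 : (y : O) ≠ 0 := nonZeroDivisors.ne_zero hy
  have hx0 : (x : O) ≠ 0 := by
    rintro rfl
    simp at hxy
    exact hz0 hxy.symm
  set J : Ideal O := Ideal.span {x} ⊔ Ideal.span {y} with hJdef
  obtain ⟨X, hX⟩ : J ∣ Ideal.span {x} := Ideal.dvd_iff_le.mpr le_sup_left
  obtain ⟨Y, hY⟩ : J ∣ Ideal.span {y} := Ideal.dvd_iff_le.mpr le_sup_right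
  have hJ0 : J ≠ 0 := by
    intro hJ
    apply hy0
    have hle : Ideal.span {(y:O)} ≤ J := le_sup_right
    rw [hJ] at hle
    simpa [Ideal.span_singleton_eq_bot] using le_bot_iff.mp hle
  have hY0 : Y ≠ 0 := by
    rintro rfl
    rw [mul_zero] at hY
    exact hy0 (by simpa [Ideal.span_singleton_eq_bot] using hY)
  have hXY : X ⊔ Y = ⊤ := by
    have hmul : J * (X ⊔ Y) = J * ⊤ := by
      rw [Ideal.mul_sup, ← hX, ← hY, Ideal.mul_top]
    exact mul_left_cancel₀ hJ0 hmul
  have hrel : Ideal.span {x} * Y = Ideal.span {y} * X := by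
    rw [hX, hY]; ring
  -- Y is not contained in any prime outside S
  have hYp : ∀ v : HeightOneSpectrum O, v ∉ (S : Set (HeightOneSpectrum O)) →
      ¬ Y ≤ v.asIdeal := by
    intro v hv hle
    have hXp : ¬ X ≤ v.asIdeal := by
      intro hX'
      exact v.isPrime.ne_top (top_le_iff.mp (hXY ▸ sup_le hX' hle))
    obtain ⟨t, htX, htp⟩ := SetLike.not_le_iff_exists.mp hXp
    have h1 : (y : O) * t ∈ Ideal.span {x} * Y := by
      rw [hrel]
      exact Ideal.mul_mem_mul (Ideal.mem_span_singleton_self y) htX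
    obtain ⟨w, hwY, hw⟩ := Ideal.mem_span_singleton_mul.mp h1
    -- valuations
    have hvz : v.intValuationDef x ≤ v.intValuationDef y := by
      have := hz v hv
      rw [← hxy, ← IsFractionRing.mk'_eq_div (A := O) (K := K) (r := x) ⟨y, hy⟩,
        HeightOneSpectrum.valuation_of_mk'] at this
      have hypos : (0 : WithZero (Multiplicative ℤ)) < v.intValuation y :=
        zero_lt_iff.mpr (v.intValuation_ne_zero _ hy0)
      exact (div_le_one₀ hypos).mp this
    have hw1 : v.intValuationDef w < 1 :=
      (v.intValuation_lt_one_iff_dvd w).mpr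
        (Ideal.dvd_iff_le.mpr (Ideal.span_le.mpr (Set.singleton_subset_iff.mpr (hle hwY))))
    have ht1 : v.intValuationDef t = 1 := intVal_eq_one htp
    have hmulv : v.intValuationDef x * v.intValuationDef w
        = v.intValuationDef y * v.intValuationDef t := by
      rw [← HeightOneSpectrum.intValuation.map_mul', ← HeightOneSpectrum.intValuation.map_mul', hw]
    rw [ht1, mul_one] at hmulv
    have hylt : v.intValuationDef y < v.intValuationDef y := by
      calc v.intValuationDef y = v.intValuationDef x * v.intValuationDef w := hmulv.symm
        _ ≤ v.intValuationDef y * v.intValuationDef w := mul_le_mul_left hvz _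
        _ < v.intValuationDef y * 1 := by
            refine mul_lt_mul_of_le_of_lt_of_nonneg_of_pos le_rfl hw1 ?_ ?_
            · exact zero_le'
            · exact zero_lt_iff.mpr (v.intValuation_ne_zero _ hy0)
        _ = v.intValuationDef y := mul_one _
    exact absurd hylt (lt_irrefl _)
  -- use finiteness of the class group
  have hYmem : Y ∈ nonZeroDivisors (Ideal O) := mem_nonZeroDivisors_of_ne_zero hY0
  set n := Fintype.card (ClassGroup O) with hn
  have hn0 : n ≠ 0 := Fintype.card_ne_zero
  have hpow : Y ^ n ∈ nonZeroDivisors (Ideal O) :=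
    mem_nonZeroDivisors_of_ne_zero (pow_ne_zero _ hY0)
  have hprin : Submodule.IsPrincipal (Y ^ n) := by
    rw [← ClassGroup.mk0_eq_one_iff hpow]
    have : (⟨Y ^ n, hpow⟩ : nonZeroDivisors (Ideal O)) = (⟨Y, hYmem⟩ : nonZeroDivisors (Ideal O)) ^ n := by
      ext; simp
    rw [this, map_pow, pow_card_eq_one]
  obtain ⟨a, ha⟩ := hprin
  have ha0 : a ≠ 0 := by
    rintro rfl
    exact pow_ne_zero n hY0 (ha.trans (Ideal.span_singleton_eq_bot.mpr rfl))
  have haY : a ∈ Y := Ideal.pow_le_self hn0 (ha ▸ Ideal.mem_span_singleton_self a)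
  refine ⟨a, ha0, ?_, ?_⟩
  · intro v hv hap
    apply hYp v hv
    have h1 : v.asIdeal ∣ Y ^ n := by
      rw [ha]
      exact Ideal.dvd_iff_le.mpr (Ideal.span_le.mpr (Set.singleton_subset_iff.mpr hap))
    have hprime : Prime v.asIdeal := (Ideal.prime_iff_isPrime v.ne_bot).mpr v.isPrime
    exact Ideal.dvd_iff_le.mp (hprime.dvd_of_dvd_pow h1)
  · have h1 : (x : O) * a ∈ Ideal.span {(y : O)} * X := by
      rw [← hrel]
      exact Ideal.mul_mem_mul (Ideal.mem_span_singleton_self x) haY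
    obtain ⟨b, _, hb⟩ := Ideal.mem_span_singleton_mul.mp h1
    refine ⟨b, ?_⟩
    have hyK : algebraMap O K y ≠ 0 := by
      simpa using (map_ne_zero_iff _ (IsFractionRing.injective O K)).mpr hy0
    rw [← hxy]
    have hb' : (x : O) * a = b * y := by linear_combination -hb
    rw [div_mul_eq_mul_div, div_eq_iff hyK, ← map_mul, ← map_mul]
    exact congrArg (algebraMap O K) hb'


/-- The multiplicative set of denominators for the `S`-integers. -/
def sDen : Submonoid O where
  carrier := {a : O | a ≠ 0 ∧ ∀ v : HeightOneSpectrum O,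
    v ∉ (S : Set (HeightOneSpectrum O)) → a ∉ v.asIdeal}
  one_mem' := ⟨one_ne_zero, fun v _ => one_notMem v⟩
  mul_mem' := fun ha hb => ⟨mul_ne_zero ha.1 hb.1, fun v hv hmem =>
    ((v.isPrime.mem_or_mem hmem).elim (ha.2 v hv) (hb.2 v hv))⟩

lemma mem_sIntegers_iff (w : K) :
    w ∈ sIntegers K S ↔ ∀ v : HeightOneSpectrum O,
      v ∉ (S : Set (HeightOneSpectrum O)) → v.valuation K w ≤ 1 := Iff.rfl

lemma coe_algebraMap_sInt (a : O) :
    ((algebraMap O (sIntegers K S) a : sIntegers K S) : K) = algebraMap O K a :=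
  Subalgebra.coe_algebraMap _ a

lemma isUnit_of_mem_sDen {a : O} (ha : a ∈ sDen S) :
    IsUnit (algebraMap O (sIntegers K S) a) := by
  have haK : algebraMap O K a ≠ 0 :=
    (map_ne_zero_iff _ (IsFractionRing.injective O K)).mpr ha.1
  have hinv : (algebraMap O K a)⁻¹ ∈ sIntegers K S := by
    rw [mem_sIntegers_iff]
    intro v hv
    rw [map_inv₀, HeightOneSpectrum.valuation_of_algebraMap]
    have : v.intValuation a = 1 := intVal_eq_one (ha.2 v hv)
    rw [this]
    simp
  apply IsUnit.of_mul_eq_one (⟨_, hinv⟩ : sIntegers K S)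
  ext
  push_cast [coe_algebraMap_sInt]
  exact mul_inv_cancel₀ haK

instance : IsLocalization (sDen S) (sIntegers K S) where
  map_units := fun a => isUnit_of_mem_sDen S a.2
  surj := fun z => by
    obtain ⟨a, ha0, hap, b, hb⟩ := exists_denom S (z : K) (fun v hv => z.2 v hv)
    refine ⟨(b, ⟨a, ha0, hap⟩), ?_⟩
    ext
    push_cast [coe_algebraMap_sInt]
    exact hb
  exists_of_eq := fun {a b} hab => by
    refine ⟨1, ?_⟩
    have : algebraMap O K a = algebraMap O K b := by
      rw [← coe_algebraMap_sInt S a, ← coe_algebraMap_sInt S b, hab]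
    rw [IsFractionRing.injective O K this]

lemma sDen_le_nonZeroDivisors : sDen S ≤ nonZeroDivisors O :=
  fun _ ha => mem_nonZeroDivisors_of_ne_zero ha.1

instance : IsDedekindDomain (sIntegers K S) :=
  IsLocalization.isDedekindDomain O (sDen_le_nonZeroDivisors S) _

instance : IsFractionRing (sIntegers K S) K :=
  IsFractionRing.isFractionRing_of_isLocalization (sDen S) _ _ (sDen_le_nonZeroDivisors S)


lemma pair_mul {R : Type*} [CommRing R] (c a b : R) :
    Ideal.span {c} * Ideal.span {a, b} = Ideal.span {c * a, c * b} := by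
  rw [Ideal.span_insert, Ideal.mul_sup, Ideal.span_singleton_mul_span_singleton,
    Ideal.span_singleton_mul_span_singleton, ← Ideal.span_insert]

end SIntAux


/-- two points `[x:y]` and `[x':y']` of `ℙ¹(K)` with `S`-integral coordinates lie
in the same `PGL₂(R_S)`-orbit if and only if the ideals `(x R_S + y R_S)` and
`(x' R_S + y' R_S)` belong to the same ideal class of `R_S`; hence the number of orbits is the
class number of `R_S`. -/
theorem orbit_iff_same_ideal_class {K : Type*} [Field K] [NumberField K]
    (S : Finset (HeightOneSpectrum (NumberField.RingOfIntegers K)))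
    (x y x' y' : sIntegers K S)
    (h : ((x : K), (y : K)) ≠ 0) (h' : ((x' : K), (y' : K)) ≠ 0) :
    (∃ (A : GL (Fin 2) (sIntegers K S)) (l : K), l ≠ 0 ∧
        (((A : Matrix (Fin 2) (Fin 2) (sIntegers K S)) 0 0 : K) * x
            + ((A : Matrix (Fin 2) (Fin 2) (sIntegers K S)) 0 1 : K) * y = l * x') ∧
        (((A : Matrix (Fin 2) (Fin 2) (sIntegers K S)) 1 0 : K) * x
            + ((A : Matrix (Fin 2) (Fin 2) (sIntegers K S)) 1 1 : K) * y = l * y')) ↔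
    (∃ c d : sIntegers K S, c ≠ 0 ∧ d ≠ 0 ∧
        Ideal.span {c} * Ideal.span {x, y} = Ideal.span {d} * Ideal.span {x', y'}) := by
  constructor
  · rintro ⟨A, l, hl, h1, h2⟩
    obtain ⟨d, c, hcmem, hdc⟩ := IsFractionRing.div_surjective (A := sIntegers K S) l
    have hdc' : (d : K) / (c : K) = l := hdc
    have hc0 : c ≠ 0 := nonZeroDivisors.ne_zero hcmem
    have hcK : (c : K) ≠ 0 := by exact_mod_cast hc0
    have hld : (c : K) * l = (d : K) := by rw [← hdc']; field_simp
    have hd0 : d ≠ 0 := by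
      rintro rfl
      apply hl
      rw [← hdc']
      simp
    set M : Matrix (Fin 2) (Fin 2) (sIntegers K S) := (A : Matrix (Fin 2) (Fin 2) (sIntegers K S))
      with hM
    set B : Matrix (Fin 2) (Fin 2) (sIntegers K S) :=
      ((A⁻¹ : GL (Fin 2) (sIntegers K S)) : Matrix (Fin 2) (Fin 2) (sIntegers K S)) with hB
    have hBA : B * M = 1 := Units.inv_mul A
    have eK00 : (B 0 0 : K) * (M 0 0 : K) + (B 0 1 : K) * (M 1 0 : K) = 1 := by
      have hh := congrArg (fun m : Matrix (Fin 2) (Fin 2) (sIntegers K S) =>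
        ((m 0 0 : sIntegers K S) : K)) hBA
      simpa [Matrix.mul_apply, Fin.sum_univ_two] using hh
    have eK01 : (B 0 0 : K) * (M 0 1 : K) + (B 0 1 : K) * (M 1 1 : K) = 0 := by
      have hh := congrArg (fun m : Matrix (Fin 2) (Fin 2) (sIntegers K S) =>
        ((m 0 1 : sIntegers K S) : K)) hBA
      simpa [Matrix.mul_apply, Fin.sum_univ_two] using hh
    have eK10 : (B 1 0 : K) * (M 0 0 : K) + (B 1 1 : K) * (M 1 0 : K) = 0 := by
      have hh := congrArg (fun m : Matrix (Fin 2) (Fin 2) (sIntegers K S) =>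
        ((m 1 0 : sIntegers K S) : K)) hBA
      simpa [Matrix.mul_apply, Fin.sum_univ_two] using hh
    have eK11 : (B 1 0 : K) * (M 0 1 : K) + (B 1 1 : K) * (M 1 1 : K) = 1 := by
      have hh := congrArg (fun m : Matrix (Fin 2) (Fin 2) (sIntegers K S) =>
        ((m 1 1 : sIntegers K S) : K)) hBA
      simpa [Matrix.mul_apply, Fin.sum_univ_two] using hh
    refine ⟨c, d, hc0, hd0, ?_⟩
    rw [SIntAux.pair_mul, SIntAux.pair_mul]
    apply le_antisymm <;>
      rw [Ideal.span_le, Set.insert_subset_iff, Set.singleton_subset_iff] <;> constructor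
    · rw [SetLike.mem_coe, Ideal.mem_span_pair]
      refine ⟨B 0 0, B 0 1, ?_⟩
      apply Subtype.coe_injective
      push_cast
      linear_combination (-((B 0 0 : K) * (x' : K))) * hld - ((B 0 1 : K) * (y' : K)) * hld
        - ((c : K) * (B 0 0 : K)) * h1 - ((c : K) * (B 0 1 : K)) * h2
        + ((c : K) * (x : K)) * eK00 + ((c : K) * (y : K)) * eK01
    · rw [SetLike.mem_coe, Ideal.mem_span_pair]
      refine ⟨B 1 0, B 1 1, ?_⟩
      apply Subtype.coe_injective
      push_cast
      linear_combination (-((B 1 0 : K) * (x' : K))) * hld - ((B 1 1 : K) * (y' : K)) * hld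
        - ((c : K) * (B 1 0 : K)) * h1 - ((c : K) * (B 1 1 : K)) * h2
        + ((c : K) * (x : K)) * eK10 + ((c : K) * (y : K)) * eK11
    · rw [SetLike.mem_coe, Ideal.mem_span_pair]
      refine ⟨M 0 0, M 0 1, ?_⟩
      apply Subtype.coe_injective
      push_cast
      linear_combination (c : K) * h1 + (x' : K) * hld
    · rw [SetLike.mem_coe, Ideal.mem_span_pair]
      refine ⟨M 1 0, M 1 1, ?_⟩
      apply Subtype.coe_injective
      push_cast
      linear_combination (c : K) * h2 + (y' : K) * hld
  · rintro ⟨c, d, hc, hd, heq⟩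
    rw [SIntAux.pair_mul, SIntAux.pair_mul] at heq
    have hcK : (c : K) ≠ 0 := by exact_mod_cast hc
    have hdK : (d : K) ≠ 0 := by exact_mod_cast hd
    have hI0 : Ideal.span ({c * x, c * y} : Set (sIntegers K S)) ≠ ⊥ := by
      intro hbot
      rw [Ideal.span_eq_bot] at hbot
      have hx0 : c * x = 0 := hbot _ (by simp)
      have hy0 : c * y = 0 := hbot _ (by simp)
      apply h
      have hx1 : x = 0 := (mul_eq_zero.mp hx0).resolve_left hc
      have hy1 : y = 0 := (mul_eq_zero.mp hy0).resolve_left hc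
      rw [hx1, hy1]
      simp [Prod.ext_iff]
    set J : FractionalIdeal (nonZeroDivisors (sIntegers K S)) K :=
      (↑(Ideal.span ({c * x, c * y} : Set (sIntegers K S))) :
        FractionalIdeal (nonZeroDivisors (sIntegers K S)) K) with hJdef
    have hJ0 : J ≠ 0 := by rwa [hJdef, Ne, FractionalIdeal.coeIdeal_eq_zero]
    have hJinv : J * J⁻¹ = 1 := mul_inv_cancel₀ hJ0
    have getR : ∀ {z w : K}, z ∈ J → w ∈ J⁻¹ → ∃ r : sIntegers K S, (r : K) = z * w := by
      intro z w hz hw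
      have hmem : z * w ∈ (1 : FractionalIdeal (nonZeroDivisors (sIntegers K S)) K) :=
        hJinv ▸ FractionalIdeal.mul_mem_mul hz hw
      obtain ⟨r, hr⟩ := (FractionalIdeal.mem_one_iff _).mp hmem
      exact ⟨r, hr⟩
    have memJ : ∀ r : sIntegers K S, r ∈ Ideal.span ({c * x, c * y} : Set (sIntegers K S)) →
        (r : K) ∈ J := fun r hr => (FractionalIdeal.mem_coeIdeal _).mpr ⟨r, hr, rfl⟩
    have key : ∀ a b : sIntegers K S,
        Ideal.span ({a, b} : Set (sIntegers K S)) = Ideal.span {c * x, c * y} →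
        ∃ α β : K, α ∈ J⁻¹ ∧ β ∈ J⁻¹ ∧ (a : K) * α + (b : K) * β = 1 := by
      intro a b hab
      have hsplit : (↑(Ideal.span ({a, b} : Set (sIntegers K S))) :
          FractionalIdeal (nonZeroDivisors (sIntegers K S)) K)
          = FractionalIdeal.spanSingleton _ (a : K) + FractionalIdeal.spanSingleton _ (b : K) := by
        rw [Ideal.span_insert, FractionalIdeal.coeIdeal_sup, FractionalIdeal.coeIdeal_span_singleton,
          FractionalIdeal.coeIdeal_span_singleton]
        rfl
      have hcoe : (↑(Ideal.span ({a, b} : Set (sIntegers K S))) :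
          FractionalIdeal (nonZeroDivisors (sIntegers K S)) K) = J := by
        rw [hJdef, hab]
      have h1mem : (1 : K) ∈ FractionalIdeal.spanSingleton
          (nonZeroDivisors (sIntegers K S)) (a : K) * J⁻¹
          + FractionalIdeal.spanSingleton (nonZeroDivisors (sIntegers K S)) (b : K) * J⁻¹ := by
        rw [← add_mul, ← hsplit, hcoe, hJinv]
        exact (FractionalIdeal.mem_one_iff _).mpr ⟨1, map_one _⟩
      rw [← FractionalIdeal.mem_coe, FractionalIdeal.coe_add, Submodule.add_eq_sup] at h1mem
      obtain ⟨za, hza, zb, hzb, hsum⟩ := Submodule.mem_sup.mp h1mem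
      rw [FractionalIdeal.mem_coe] at hza hzb
      obtain ⟨α, hα, hαe⟩ := FractionalIdeal.mem_singleton_mul.mp hza
      obtain ⟨β, hβ, hβe⟩ := FractionalIdeal.mem_singleton_mul.mp hzb
      exact ⟨α, β, hα, hβ, by rw [← hαe, ← hβe]; exact hsum⟩
    obtain ⟨α, β, hα, hβ, hαβ⟩ := key (c * x) (c * y) rfl
    obtain ⟨ν, μ, hν, hμ, hνμ⟩ := key (d * x') (d * y') heq.symm
    have hpJ : ((c * x : sIntegers K S) : K) ∈ J := memJ _ (Ideal.subset_span (by simp))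
    have hqJ : ((c * y : sIntegers K S) : K) ∈ J := memJ _ (Ideal.subset_span (by simp))
    have hp'J : ((d * x' : sIntegers K S) : K) ∈ J :=
      memJ _ (by rw [heq]; exact Ideal.subset_span (by simp))
    have hq'J : ((d * y' : sIntegers K S) : K) ∈ J :=
      memJ _ (by rw [heq]; exact Ideal.subset_span (by simp))
    obtain ⟨r1, hr1⟩ := getR hp'J hα
    obtain ⟨r2, hr2⟩ := getR hqJ hμ
    obtain ⟨r3, hr3⟩ := getR hp'J hβ
    obtain ⟨r4, hr4⟩ := getR hpJ hμ
    obtain ⟨r5, hr5⟩ := getR hq'J hα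
    obtain ⟨r6, hr6⟩ := getR hqJ hν
    obtain ⟨r7, hr7⟩ := getR hq'J hβ
    obtain ⟨r8, hr8⟩ := getR hpJ hν
    push_cast at hαβ hνμ hr1 hr2 hr3 hr4 hr5 hr6 hr7 hr8
    set N : Matrix (Fin 2) (Fin 2) (sIntegers K S) :=
      !![r1 + r2, r3 - r4; r5 - r6, r7 + r8] with hN
    have hdet : N.det = 1 := by
      apply Subtype.coe_injective
      rw [hN, Matrix.det_fin_two_of]
      push_cast
      rw [hr1, hr2, hr3, hr4, hr5, hr6, hr7, hr8]
      linear_combination ((d : K) * (x' : K) * ν + (d : K) * (y' : K) * μ) * hαβ + hνμ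
    refine ⟨Matrix.SpecialLinearGroup.toGL ⟨N, hdet⟩, (d : K) / (c : K),
      div_ne_zero hdK hcK, ?_, ?_⟩
    · show ((N 0 0 : sIntegers K S) : K) * x + ((N 0 1 : sIntegers K S) : K) * y = _
      rw [hN]
      simp only [Matrix.cons_val', Matrix.cons_val_zero, Matrix.cons_val_one, Matrix.head_cons,
        Matrix.empty_val', Matrix.cons_val_fin_one, Matrix.head_fin_const, Matrix.of_apply]
      push_cast
      rw [hr1, hr2, hr3, hr4]
      field_simp
      linear_combination ((d : K) * (x' : K)) * hαβ
    · show ((N 1 0 : sIntegers K S) : K) * x + ((N 1 1 : sIntegers K S) : K) * y = _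
      rw [hN]
      simp only [Matrix.cons_val', Matrix.cons_val_zero, Matrix.cons_val_one, Matrix.head_cons,
        Matrix.empty_val', Matrix.cons_val_fin_one, Matrix.head_fin_const, Matrix.of_apply]
      push_cast
      rw [hr5, hr6, hr7, hr8]
      field_simp
      linear_combination ((d : K) * (y' : K)) * hαβ
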